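/- Let $d \ge 2$, $\rho > 0$, and let $\phi = (\phi_1, \dots, \phi_d)$ be functions in $H^1(B_\rho)$ satisfying the smallness condition $\rho^{-2}\fint_{B_\rho} |\phi|^2 \, dx \le \varepsilon_0^2$ for a sufficiently small constant $\varepsilon_0 = \varepsilon_0(d) > 0$. Then for every $b \in \mathbb{R}^d$, $|b|^2 \le C(d) \fint_{B_\rho} |\nabla(b_i(x_i + \phi_i))|^2 \, dx$. -/

import Mathlib

open MeasureTheory Metric

/-- Partial derivative of a scalar field on `ℝ^d` in the `i`-th coordinate direction. -/
noncomputable def pd {d : ℕ} (f : EuclideanSpace ℝ (Fin d) → ℝ) (i : Fin d)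
    (x : EuclideanSpace ℝ (Fin d)) : ℝ :=
  fderiv ℝ f x (EuclideanSpace.single i 1)

lemma integral_cs {α : Type*} [MeasurableSpace α] (μ : Measure α) (f g : α → ℝ)
    (hf2 : Integrable (fun x => f x ^ 2) μ) (hg2 : Integrable (fun x => g x ^ 2) μ)
    (hfg : Integrable (fun x => f x * g x) μ) :
    (∫ x, f x * g x ∂μ) ^ 2 ≤ (∫ x, f x ^ 2 ∂μ) * (∫ x, g x ^ 2 ∂μ) := by
  have key : ∀ t : ℝ, 0 ≤ (∫ x, g x ^ 2 ∂μ) * (t * t) + (2 * ∫ x, f x * g x ∂μ) * t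
      + (∫ x, f x ^ 2 ∂μ) := by
    intro t
    have h0 : 0 ≤ ∫ x, (f x + t * g x) ^ 2 ∂μ := integral_nonneg fun x => sq_nonneg _
    have heq : ∫ x, (f x + t * g x) ^ 2 ∂μ
        = (∫ x, g x ^ 2 ∂μ) * (t * t) + (2 * ∫ x, f x * g x ∂μ) * t + (∫ x, f x ^ 2 ∂μ) := by
      have : (fun x => (f x + t * g x) ^ 2)
          = fun x => (t * t) * g x ^ 2 + (2 * t) * (f x * g x) + f x ^ 2 := by
        funext x; ring
      rw [this]
      have h1 : Integrable (fun x => t * t * g x ^ 2 + 2 * t * (f x * g x)) μ :=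
        (hg2.const_mul _).add (hfg.const_mul _)
      rw [integral_add h1 hf2]
      have h2 : (∫ x, (t * t * g x ^ 2 + 2 * t * (f x * g x)) ∂μ)
          = ∫ x, t * t * g x ^ 2 ∂μ + ∫ x, 2 * t * (f x * g x) ∂μ :=
        integral_add (hg2.const_mul _) (hfg.const_mul _)
      rw [h2]
      rw [integral_const_mul, integral_const_mul]
      ring
    linarith [heq ▸ h0]
  have hd := discrim_le_zero key
  rw [discrim] at hd
  nlinarith [hd]

lemma hasFDerivAt_scaled {d : ℕ} (f : EuclideanSpace ℝ (Fin d) → ℝ) (hf : Differentiable ℝ f)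
    (ρ : ℝ) (x : EuclideanSpace ℝ (Fin d)) :
    HasFDerivAt (fun y => f (ρ⁻¹ • y))
      ((fderiv ℝ f (ρ⁻¹ • x)).comp (ρ⁻¹ • ContinuousLinearMap.id ℝ (EuclideanSpace ℝ (Fin d))))
      x := by
  have h1 : HasFDerivAt (fun y : EuclideanSpace ℝ (Fin d) => ρ⁻¹ • y)
      (ρ⁻¹ • ContinuousLinearMap.id ℝ (EuclideanSpace ℝ (Fin d))) x :=
    (hasFDerivAt_id x).const_smul ρ⁻¹
  exact ((hf (ρ⁻¹ • x)).hasFDerivAt).comp x h1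

lemma fderiv_scaled {d : ℕ} (f : EuclideanSpace ℝ (Fin d) → ℝ) (hf : Differentiable ℝ f)
    (ρ : ℝ) (x v : EuclideanSpace ℝ (Fin d)) :
    fderiv ℝ (fun y => f (ρ⁻¹ • y)) x v = ρ⁻¹ * fderiv ℝ f (ρ⁻¹ • x) v := by
  rw [(hasFDerivAt_scaled f hf ρ x).fderiv]
  simp [smul_eq_mul]

set_option maxHeartbeats 1000000 in
theorem corrected_coordinates_independence (d : ℕ) (hd : 2 ≤ d) :
    ∃ ε0 : ℝ, 0 < ε0 ∧ ∃ C : ℝ, 0 < C ∧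
      ∀ (ρ : ℝ), 0 < ρ →
        ∀ φ : Fin d → EuclideanSpace ℝ (Fin d) → ℝ,
          (∀ i, ContDiff ℝ 1 (φ i)) →
          ρ⁻¹ ^ 2 * (⨍ x in ball (0 : EuclideanSpace ℝ (Fin d)) ρ, ∑ i, (φ i x) ^ 2)
            ≤ ε0 ^ 2 →
          ∀ b : Fin d → ℝ,
            ∑ i, (b i) ^ 2
              ≤ C * ⨍ x in ball (0 : EuclideanSpace ℝ (Fin d)) ρ,
                  ∑ j, (pd (fun y => ∑ i, b i * (y i + φ i y)) j x) ^ 2 := by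
  classical
  haveI : Nonempty (Fin d) := ⟨⟨0, lt_of_lt_of_le two_pos hd⟩⟩
  set E := EuclideanSpace ℝ (Fin d) with hE
  set η₁ : ContDiffBump (0 : E) := ⟨1/4, 1/2, by norm_num, by norm_num⟩ with hη₁def
  set A : ℝ := ∫ x : E, η₁ x with hAdef
  set B : ℝ := ∫ x : E, (η₁ x) ^ 2 with hBdef
  set K : ℝ := ∫ x : E, ∑ j, (fderiv ℝ (⇑η₁) x (EuclideanSpace.single j 1)) ^ 2 with hKdef
  set c : ℝ := (volume (ball (0 : E) 1)).toReal with hcdef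
  have hA : 0 < A := η₁.integral_pos
  have hB : 0 ≤ B := integral_nonneg fun x => sq_nonneg _
  have hK : 0 ≤ K := integral_nonneg fun x => Finset.sum_nonneg fun j _ => sq_nonneg _
  have hc : 0 < c :=
    ENNReal.toReal_pos (measure_ball_pos _ _ one_pos).ne' measure_ball_lt_top.ne
  refine ⟨A / (2 * Real.sqrt ((K + 1) * c)), by positivity, 4 * (B + 1) * c / A ^ 2,
    by positivity, ?_⟩
  intro ρ hρ φ hφ hsmall b
  set ε0 : ℝ := A / (2 * Real.sqrt ((K + 1) * c)) with hε0def
  have hε0sq : ε0 ^ 2 = A ^ 2 / (4 * ((K + 1) * c)) := by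
    rw [hε0def, div_pow, mul_pow, Real.sq_sqrt (by positivity)]
    ring
  -- basic objects
  set u : E → ℝ := fun y => ∑ i, b i * (y i + φ i y) with hu_def
  set w : E → ℝ := fun y => ∑ i, b i * φ i y with hw_def
  set Lb : E →L[ℝ] ℝ := ∑ i, b i • (EuclideanSpace.proj i : E →L[ℝ] ℝ) with hLb_def
  set η : E → ℝ := fun x => η₁ (ρ⁻¹ • x) with hη_def
  have hLb_apply : ∀ y : E, Lb y = ∑ i, b i * y i := by
    intro y
    simp only [hLb_def, ContinuousLinearMap.sum_apply, ContinuousLinearMap.smul_apply,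
      smul_eq_mul]
    exact Finset.sum_congr rfl fun i _ => by
      rw [show (EuclideanSpace.proj i : E →L[ℝ] ℝ) y = y i from rfl]
  have hLb_single : ∀ j, Lb (EuclideanSpace.single j 1) = b j := by
    intro j
    rw [hLb_apply]
    simp [EuclideanSpace.single_apply]
  have hu_eq : ∀ y, u y = Lb y + w y := by
    intro y
    rw [hLb_apply, hu_def, hw_def]
    simp [mul_add, Finset.sum_add_distrib]
  -- smoothness
  have hw_cd : ContDiff ℝ 1 w := ContDiff.sum fun i _ => contDiff_const.mul (hφ i)
  have hu_cd : ContDiff ℝ 1 u := by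
    have : u = fun y => Lb y + w y := funext hu_eq
    rw [this]
    exact Lb.contDiff.add hw_cd
  have hu_diff : Differentiable ℝ u := hu_cd.differentiable one_ne_zero
  have hη₁_cd : ContDiff ℝ 1 (⇑η₁) := η₁.contDiff
  have hη₁_diff : Differentiable ℝ (⇑η₁) := hη₁_cd.differentiable one_ne_zero
  have hη_cont : Continuous η := η₁.continuous.comp (continuous_const_smul _)
  have hη_diff : Differentiable ℝ η := fun x =>
    ((hasFDerivAt_scaled (⇑η₁) hη₁_diff ρ x).differentiableAt)
  -- support of η
  have hη_supp : ∀ x : E, x ∉ closedBall (0 : E) (ρ / 2) → η x = 0 := by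
    intro x hx
    apply η₁.zero_of_le_dist
    rw [mem_closedBall, not_le] at hx
    have hd : dist (ρ⁻¹ • x) (0 : E) = ρ⁻¹ * dist x 0 := by
      rw [dist_zero_right, dist_zero_right, norm_smul, norm_inv, Real.norm_eq_abs,
        abs_of_pos hρ]
    rw [hd]
    have : ρ⁻¹ * (ρ / 2) ≤ ρ⁻¹ * dist x 0 :=
      mul_le_mul_of_nonneg_left hx.le (by positivity)
    calc (1/2 : ℝ) = ρ⁻¹ * (ρ / 2) := by field_simp
    _ ≤ ρ⁻¹ * dist x 0 := this
  have hη_tsupp : tsupport η ⊆ closedBall (0 : E) (ρ / 2) := by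
    apply closure_minimal _ (isCompact_closedBall (0:E) (ρ/2)).isClosed
    intro x hx
    by_contra hxc
    exact hx (hη_supp x hxc)
  have hη_hcs : HasCompactSupport η :=
    HasCompactSupport.intro (isCompact_closedBall (0 : E) (ρ / 2)) hη_supp
  have hpdη_zero : ∀ x : E, x ∉ closedBall (0 : E) (ρ / 2) → fderiv ℝ η x = 0 := by
    intro x hx
    exact fderiv_of_notMem_tsupport ℝ fun h => hx (hη_tsupp h)
  have hpdη_hcs : ∀ v : E, HasCompactSupport (fun x => fderiv ℝ η x v) := by
    intro v
    apply HasCompactSupport.intro (isCompact_closedBall (0 : E) (ρ / 2))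
    intro x hx
    rw [hpdη_zero x hx]
    rfl
  have hpdη_eq : ∀ (x v : E), fderiv ℝ η x v = ρ⁻¹ * fderiv ℝ (⇑η₁) (ρ⁻¹ • x) v := by
    intro x v
    rw [hη_def]
    exact fderiv_scaled (⇑η₁) hη₁_diff ρ x v
  have hpdη_cont : ∀ v : E, Continuous fun x => fderiv ℝ η x v := by
    intro v
    have h1 : Continuous fun x : E => fderiv ℝ (⇑η₁) x :=
      hη₁_cd.continuous_fderiv one_ne_zero
    have h2 : (fun x : E => fderiv ℝ η x v) = fun x => ρ⁻¹ * fderiv ℝ (⇑η₁) (ρ⁻¹ • x) v :=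
      funext fun x => hpdη_eq x v
    rw [h2]
    exact continuous_const.mul
      ((ContinuousLinearMap.apply ℝ ℝ v).continuous.comp (h1.comp (continuous_const_smul _)))
  have hpdu_cont : ∀ v : E, Continuous fun x => fderiv ℝ u x v := by
    intro v
    have h1 : Continuous fun x : E => fderiv ℝ u x := hu_cd.continuous_fderiv one_ne_zero
    exact (ContinuousLinearMap.apply ℝ ℝ v).continuous.comp h1
  have hw_cont : Continuous w := hw_cd.continuous
  have hu_cont : Continuous u := hu_cd.continuous
  have hmulint : ∀ (f g : E → ℝ), Continuous f → Continuous g → HasCompactSupport f →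
      Integrable (fun x => f x * g x) volume := by
    intro f g hf hg hcs
    exact (hf.mul hg).integrable_of_hasCompactSupport hcs.mul_right
  have hIBP : ∀ j : Fin d, b j * (∫ x : E, η x) =
      (∫ x : E, η x * fderiv ℝ u x (EuclideanSpace.single j 1))
      + ∫ x : E, fderiv ℝ η x (EuclideanSpace.single j 1) * w x := by
    intro j
    set v : E := EuclideanSpace.single j 1 with hv
    have hη'u : Integrable (fun x => fderiv ℝ η x v * u x) volume :=
      hmulint _ _ (hpdη_cont v) hu_cont (hpdη_hcs v)
    have hηu' : Integrable (fun x => η x * fderiv ℝ u x v) volume :=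
      hmulint _ _ hη_cont (hpdu_cont v) hη_hcs
    have hηu : Integrable (fun x => η x * u x) volume := hmulint _ _ hη_cont hu_cont hη_hcs
    have h1 : ∫ x : E, η x * fderiv ℝ u x v = - ∫ x : E, fderiv ℝ η x v * u x :=
      integral_mul_fderiv_eq_neg_fderiv_mul_of_integrable hη'u hηu' hηu (fun x _ => hη_diff x) (fun x _ => hu_diff x)
    have hLb_diff : Differentiable ℝ (⇑Lb) := Lb.differentiable
    have hfdLb : ∀ x : E, fderiv ℝ (⇑Lb) x v = b j := by
      intro x; rw [ContinuousLinearMap.fderiv]; exact hLb_single j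
    have hη'L : Integrable (fun x => fderiv ℝ η x v * Lb x) volume :=
      hmulint _ _ (hpdη_cont v) Lb.continuous (hpdη_hcs v)
    have hηL' : Integrable (fun x => η x * fderiv ℝ (⇑Lb) x v) volume := by
      have : (fun x : E => η x * fderiv ℝ (⇑Lb) x v) = fun x => η x * b j := by
        funext x; rw [hfdLb x]
      rw [this]
      exact hmulint _ _ hη_cont continuous_const hη_hcs
    have hηL : Integrable (fun x => η x * Lb x) volume :=
      hmulint _ _ hη_cont Lb.continuous hη_hcs
    have h2 : ∫ x : E, η x * fderiv ℝ (⇑Lb) x v = - ∫ x : E, fderiv ℝ η x v * Lb x :=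
      integral_mul_fderiv_eq_neg_fderiv_mul_of_integrable hη'L hηL' hηL (fun x _ => hη_diff x) (fun x _ => hLb_diff x)
    have h2' : b j * (∫ x : E, η x) = - ∫ x : E, fderiv ℝ η x v * Lb x := by
      rw [← h2]
      simp_rw [hfdLb]
      rw [integral_mul_const]
      ring
    have hη'w : Integrable (fun x => fderiv ℝ η x v * w x) volume :=
      hmulint _ _ (hpdη_cont v) hw_cont (hpdη_hcs v)
    have hsplit : ∫ x : E, fderiv ℝ η x v * u x
        = (∫ x : E, fderiv ℝ η x v * Lb x) + ∫ x : E, fderiv ℝ η x v * w x := by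
      rw [← integral_add hη'L hη'w]
      congr 1; funext x; rw [hu_eq x]; ring
    rw [h2']
    rw [hsplit] at h1
    linarith [h1]
  set Bρ : Set E := ball (0 : E) ρ with hBρ
  have hball_sub : closedBall (0 : E) (ρ/2) ⊆ Bρ :=
    closedBall_subset_ball (by linarith)
  have hconv : ∀ f : E → ℝ, (∀ x : E, x ∉ closedBall (0:E) (ρ/2) → f x = 0) →
      ∫ x in Bρ, f x = ∫ x, f x := by
    intro f hf
    exact setIntegral_eq_integral_of_forall_compl_eq_zero fun x hx =>
      hf x fun h => hx (hball_sub h)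
  have hball_int : ∀ f : E → ℝ, Continuous f → IntegrableOn f Bρ volume := by
    intro f hf
    exact (hf.continuousOn.integrableOn_compact (isCompact_closedBall (0:E) ρ)).mono_set
      ball_subset_closedBall
  have hφ_cont : ∀ i, Continuous (φ i) := fun i => (hφ i).continuous
  -- per-coordinate Cauchy-Schwarz estimate
  have hj : ∀ j : Fin d,
      (b j)^2 * (∫ x : E, η x)^2 ≤
        2 * (∫ x in Bρ, (η x)^2) * (∫ x in Bρ, (fderiv ℝ u x (EuclideanSpace.single j 1))^2)
        + 2 * (∫ x in Bρ, (fderiv ℝ η x (EuclideanSpace.single j 1))^2)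
          * (∫ x in Bρ, (w x)^2) := by
    intro j
    set v : E := EuclideanSpace.single j 1 with hv
    have e1 : ∫ x : E, η x * fderiv ℝ u x v = ∫ x in Bρ, η x * fderiv ℝ u x v :=
      (hconv _ fun x hx => by rw [hη_supp x hx, zero_mul]).symm
    have e2 : ∫ x : E, fderiv ℝ η x v * w x = ∫ x in Bρ, fderiv ℝ η x v * w x :=
      (hconv _ fun x hx => by rw [hpdη_zero x hx]; simp).symm
    have cs1 : (∫ x in Bρ, η x * fderiv ℝ u x v)^2
        ≤ (∫ x in Bρ, (η x)^2) * (∫ x in Bρ, (fderiv ℝ u x v)^2) :=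
      integral_cs _ _ _ (hball_int _ (hη_cont.pow 2)) (hball_int _ ((hpdu_cont v).pow 2))
        (hball_int _ (hη_cont.mul (hpdu_cont v)))
    have cs2 : (∫ x in Bρ, fderiv ℝ η x v * w x)^2
        ≤ (∫ x in Bρ, (fderiv ℝ η x v)^2) * (∫ x in Bρ, (w x)^2) :=
      integral_cs _ _ _ (hball_int _ ((hpdη_cont v).pow 2)) (hball_int _ (hw_cont.pow 2))
        (hball_int _ ((hpdη_cont v).mul hw_cont))
    have hXY : (b j * (∫ x : E, η x))^2
        ≤ 2 * (∫ x in Bρ, η x * fderiv ℝ u x v)^2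
          + 2 * (∫ x in Bρ, fderiv ℝ η x v * w x)^2 := by
      rw [hIBP j, e1, e2]
      nlinarith [sq_nonneg ((∫ x in Bρ, η x * fderiv ℝ u x v)
        - (∫ x in Bρ, fderiv ℝ η x v * w x))]
    calc (b j)^2 * (∫ x : E, η x)^2 = (b j * (∫ x : E, η x))^2 := by ring
    _ ≤ 2 * (∫ x in Bρ, η x * fderiv ℝ u x v)^2
          + 2 * (∫ x in Bρ, fderiv ℝ η x v * w x)^2 := hXY
    _ ≤ _ := by nlinarith [cs1, cs2]
  -- sum over coordinates
  have hsum : (∑ i, (b i)^2) * (∫ x : E, η x)^2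
      ≤ 2 * (∫ x in Bρ, (η x)^2)
          * (∑ j, ∫ x in Bρ, (fderiv ℝ u x (EuclideanSpace.single j 1))^2)
      + 2 * (∑ j, ∫ x in Bρ, (fderiv ℝ η x (EuclideanSpace.single j 1))^2)
          * (∫ x in Bρ, (w x)^2) := by
    rw [Finset.sum_mul]
    calc ∑ i, (b i)^2 * (∫ x : E, η x)^2
        ≤ ∑ j, (2 * (∫ x in Bρ, (η x)^2)
            * (∫ x in Bρ, (fderiv ℝ u x (EuclideanSpace.single j 1))^2)
          + 2 * (∫ x in Bρ, (fderiv ℝ η x (EuclideanSpace.single j 1))^2)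
            * (∫ x in Bρ, (w x)^2)) := Finset.sum_le_sum fun j _ => hj j
    _ = _ := by
        rw [Finset.sum_add_distrib, ← Finset.mul_sum, ← Finset.sum_mul, ← Finset.mul_sum]
  -- interchange sums and integrals
  have hiu : (∑ j, ∫ x in Bρ, (fderiv ℝ u x (EuclideanSpace.single j 1))^2)
      = ∫ x in Bρ, ∑ j, (fderiv ℝ u x (EuclideanSpace.single j 1))^2 :=
    (integral_finset_sum Finset.univ fun j _ => hball_int _ ((hpdu_cont _).pow 2)).symm
  have hiη : (∑ j, ∫ x in Bρ, (fderiv ℝ η x (EuclideanSpace.single j 1))^2)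
      = ∫ x in Bρ, ∑ j, (fderiv ℝ η x (EuclideanSpace.single j 1))^2 :=
    (integral_finset_sum Finset.univ fun j _ => hball_int _ ((hpdη_cont _).pow 2)).symm
  -- scaling identities
  have hfr : Module.finrank ℝ E = d := finrank_euclideanSpace_fin
  have hscale : ∀ f : E → ℝ, ∫ x : E, f (ρ⁻¹ • x) = ρ^d * ∫ x : E, f x := by
    intro f
    rw [Measure.integral_comp_smul (μ := volume) f ρ⁻¹, hfr, smul_eq_mul]
    congr 1
    rw [inv_pow, inv_inv, abs_of_pos (pow_pos hρ d)]
  have hIη : (∫ x : E, η x) = ρ^d * A := hscale (⇑η₁)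
  have hIη2 : (∫ x : E, (η x)^2) = ρ^d * B := hscale fun y => (η₁ y)^2
  have hIηd : (∫ x : E, ∑ j, (fderiv ℝ η x (EuclideanSpace.single j 1))^2)
      = ρ⁻¹^2 * (ρ^d * K) := by
    have hpt : (fun x : E => ∑ j, (fderiv ℝ η x (EuclideanSpace.single j 1))^2)
        = fun x : E => ρ⁻¹^2 *
          ((fun y : E => ∑ j, (fderiv ℝ (⇑η₁) y (EuclideanSpace.single j 1))^2) (ρ⁻¹ • x)) := by
      funext x
      rw [Finset.mul_sum]
      exact Finset.sum_congr rfl fun j _ => by rw [hpdη_eq x _]; ring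
    rw [hpt, integral_const_mul]
    congr 1
    exact hscale fun y : E => ∑ j, (fderiv ℝ (⇑η₁) y (EuclideanSpace.single j 1))^2
  -- ball volume and averages
  have hV : (volume Bρ).toReal = ρ^d * c := by
    rw [hBρ, Measure.addHaar_ball volume (0:E) hρ.le, ENNReal.toReal_mul,
      ENNReal.toReal_ofReal (pow_nonneg hρ.le _), hfr]
  have hVpos : (0:ℝ) < ρ^d * c := by positivity
  have havg : ∀ f : E → ℝ, ∫ x in Bρ, f x = (ρ^d * c) * ⨍ x in Bρ, f x := by
    intro f
    rw [setAverage_eq, measureReal_def, hV, smul_eq_mul, ← mul_assoc, mul_inv_cancel₀ hVpos.ne', one_mul]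
  have havg_nonneg : ∀ f : E → ℝ, (∀ x, 0 ≤ f x) → 0 ≤ ⨍ x in Bρ, f x := by
    intro f hf
    rw [setAverage_eq, smul_eq_mul]
    refine mul_nonneg (inv_nonneg.mpr ENNReal.toReal_nonneg) ?_
    exact setIntegral_nonneg (hBρ ▸ measurableSet_ball) fun x _ => hf x
  simp only [pd]
  set S : ℝ := ⨍ x in Bρ, ∑ j, (fderiv ℝ u x (EuclideanSpace.single j 1))^2 with hSdef
  set P : ℝ := ⨍ x in Bρ, ∑ i, (φ i x)^2 with hPdef
  have hS : 0 ≤ S := havg_nonneg _ fun x => Finset.sum_nonneg fun j _ => sq_nonneg _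
  have hP : 0 ≤ P := havg_nonneg _ fun x => Finset.sum_nonneg fun i _ => sq_nonneg _
  set X : ℝ := ∑ i, (b i)^2 with hXdef
  have hX : 0 ≤ X := Finset.sum_nonneg fun i _ => sq_nonneg _
  have hT1 : ∫ x in Bρ, (η x)^2 ≤ ρ^d * B := by
    rw [← hIη2]
    refine setIntegral_le_integral ?_ (Filter.Eventually.of_forall fun x => sq_nonneg _)
    refine (hη_cont.pow 2).integrable_of_hasCompactSupport ?_
    exact HasCompactSupport.intro (isCompact_closedBall (0:E) (ρ/2))
      fun x hx => by rw [Pi.pow_apply, hη_supp x hx]; ring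
  have hT3 : ∫ x in Bρ, ∑ j, (fderiv ℝ η x (EuclideanSpace.single j 1))^2
      ≤ ρ⁻¹^2 * (ρ^d * K) := by
    rw [← hIηd]
    refine setIntegral_le_integral ?_
      (Filter.Eventually.of_forall fun x => Finset.sum_nonneg fun j _ => sq_nonneg _)
    refine (continuous_finset_sum _ fun j _ =>
      (hpdη_cont _).pow 2).integrable_of_hasCompactSupport ?_
    exact HasCompactSupport.intro (isCompact_closedBall (0:E) (ρ/2))
      fun x hx => by simp [hpdη_zero x hx]
  have hT3n : 0 ≤ ∫ x in Bρ, ∑ j, (fderiv ℝ η x (EuclideanSpace.single j 1))^2 :=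
    setIntegral_nonneg (hBρ ▸ measurableSet_ball)
      fun x _ => Finset.sum_nonneg fun j _ => sq_nonneg _
  have hT4n : 0 ≤ ∫ x in Bρ, (w x)^2 :=
    setIntegral_nonneg (hBρ ▸ measurableSet_ball) fun x _ => sq_nonneg _
  have hT2 : ∫ x in Bρ, ∑ j, (fderiv ℝ u x (EuclideanSpace.single j 1))^2 = (ρ^d*c) * S :=
    havg _
  have hT2n : (0:ℝ) ≤ (ρ^d*c) * S := mul_nonneg hVpos.le hS
  have hT4 : ∫ x in Bρ, (w x)^2 ≤ X * ((ρ^d*c) * P) := by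
    have hwpt : ∀ x : E, (w x)^2 ≤ X * ∑ i, (φ i x)^2 := fun x =>
      Finset.sum_mul_sq_le_sq_mul_sq Finset.univ b fun i => φ i x
    calc ∫ x in Bρ, (w x)^2 ≤ ∫ x in Bρ, X * ∑ i, (φ i x)^2 := by
          refine integral_mono (hball_int _ (hw_cont.pow 2)) ?_ hwpt
          exact (hball_int _ (continuous_finset_sum _ fun i _ => (hφ_cont i).pow 2)).const_mul X
    _ = X * ∫ x in Bρ, ∑ i, (φ i x)^2 := integral_const_mul X _
    _ = X * ((ρ^d*c) * P) := by rw [havg]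
  clear_value A B K c ε0 S P X
  rw [hiu, hiη, hIη, hT2] at hsum
  clear hconv hball_int hmulint hIBP hj hiu hiη hscale hIη hIη2 hIηd havg havg_nonneg
    hη_supp hη_tsupp hη_hcs hpdη_zero hpdη_hcs hpdη_eq hpdη_cont hpdu_cont hη_cont hη_diff
    hw_cont hu_cont hφ_cont hLb_apply hLb_single hu_eq hw_cd hu_cd hu_diff hη₁_cd hη₁_diff
    hV hball_sub hfr hVpos hε0def hη₁def hAdef hBdef hKdef hcdef
  have s1 : 2 * (∫ x in Bρ, (η x)^2) * ((ρ^d*c) * S) ≤ 2*(ρ^d*B)*((ρ^d*c)*S) :=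
    mul_le_mul_of_nonneg_right (by linarith [hT1]) hT2n
  have hb3 : (0:ℝ) ≤ ρ⁻¹^2 * (ρ^d*K) :=
    mul_nonneg (sq_nonneg _) (mul_nonneg (pow_pos hρ d).le hK)
  have s2 : 2 * (∫ x in Bρ, ∑ j, (fderiv ℝ η x (EuclideanSpace.single j 1))^2)
        * (∫ x in Bρ, (w x)^2)
      ≤ 2*(ρ⁻¹^2*(ρ^d*K))*(X*((ρ^d*c)*P)) :=
    mul_le_mul (by linarith [hT3]) hT4 hT4n (by linarith [hb3])
  have seq : 2*(ρ⁻¹^2*(ρ^d*K))*(X*((ρ^d*c)*P)) = (2*K*c*X*(ρ^d)^2)*(ρ⁻¹^2*P) := by ring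
  have s4 : (2*K*c*X*(ρ^d)^2)*(ρ⁻¹^2*P) ≤ (2*K*c*X*(ρ^d)^2)*ε0^2 := by
    refine mul_le_mul_of_nonneg_left hsmall ?_
    exact mul_nonneg (mul_nonneg (mul_nonneg (by linarith : (0:ℝ) ≤ 2*K) hc.le) hX)
      (sq_nonneg _)
  have s2' : 2 * (∫ x in Bρ, ∑ j, (fderiv ℝ η x (EuclideanSpace.single j 1))^2)
        * (∫ x in Bρ, (w x)^2) ≤ (2*K*c*X*(ρ^d)^2)*(ρ⁻¹^2*P) := seq ▸ s2
  have h1 : 2*K*c*ε0^2 ≤ A^2/2 := by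
    have hKc : (0:ℝ) < 4*((K+1)*c) := by nlinarith
    have h2 : ε0^2 * (4*((K+1)*c)) = A^2 := by
      rw [hε0sq]; exact div_mul_cancel₀ _ hKc.ne'
    linarith [h2, mul_nonneg hc.le (sq_nonneg ε0)]
  have s5 : (2*K*c*X*(ρ^d)^2)*ε0^2 ≤ (X*(ρ^d)^2)*(A^2/2) := by
    have e : (2*K*c*X*(ρ^d)^2)*ε0^2 = (X*(ρ^d)^2)*(2*K*c*ε0^2) := by ring
    rw [e]
    exact mul_le_mul_of_nonneg_left h1 (mul_nonneg hX (sq_nonneg _))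
  have hbig : X*(ρ^d*A)^2 ≤ 2*(ρ^d*B)*((ρ^d*c)*S) + (X*(ρ^d)^2)*(A^2/2) := by
    linarith [hsum, s1, s2', s4, s5]
  have hr2 : (0:ℝ) < (ρ^d)^2 := by positivity
  have key2 : 0 ≤ (4*B*c*S - X*A^2) * (ρ^d)^2 := by nlinarith [hbig]
  have key3 : (0:ℝ) ≤ 4*B*c*S - X*A^2 := by
    have h := div_nonneg key2 hr2.le
    rwa [mul_div_cancel_right₀ _ hr2.ne'] at h
  rw [div_mul_eq_mul_div, le_div_iff₀ (by positivity : (0:ℝ) < A^2)]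
  linarith [key3, mul_nonneg hc.le hS]
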